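/- Let v₁, …, v_m ∈ ℝⁿ be vectors whose nonnegative span is all of ℝⁿ (i.e., every element of ℝⁿ is a nonnegative linear combination of v₁,…,v_m). Then for every real z > 0 and every w ∈ ℂⁿ, the function y ↦ exp(−(Σ_{i=1}^{m} e^{⟨vᵢ, y⟩})/z) · exp(⟨w, y⟩) is integrable on ℝⁿ, where ⟨w, y⟩ = Σ_j w_j y_j. -/

import Mathlib

open MeasureTheory

lemma integrable_exp_neg_abs' : Integrable (fun x : ℝ => Real.exp (-|x|)) := by
  have hIoi : IntegrableOn (fun x : ℝ => Real.exp (-|x|)) (Set.Ioi 0) := by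
    refine ((exp_neg_integrableOn_Ioi 0 one_pos).congr_fun (fun x hx => ?_) measurableSet_Ioi)
    rw [abs_of_pos hx]; ring_nf
  have hIic : IntegrableOn (fun x : ℝ => Real.exp (-|x|)) (Set.Iic 0) := by
    rw [← Measure.map_neg_eq_self (volume : Measure ℝ)]
    have m : MeasurableEmbedding fun x : ℝ => -x := (Homeomorph.neg ℝ).measurableEmbedding
    rw [m.integrableOn_map_iff]
    simp_rw [Function.comp_def, abs_neg, Set.neg_preimage, Set.neg_Iic, neg_zero]
    exact Iff.mpr integrableOn_Ici_iff_integrableOn_Ioi hIoi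
  have := hIic.union hIoi
  rwa [Set.Iic_union_Ioi, integrableOn_univ] at this

lemma quad_bound' {a : ℝ} (ha : 0 < a) (b t : ℝ) : b*t - a*t^2 ≤ b^2/(4*a) := by
  rw [le_div_iff₀ (by linarith : (0:ℝ) < 4*a)]
  nlinarith [sq_nonneg (b - 2*a*t)]

lemma sq_div_four_le_exp' {s : ℝ} (hs : 0 ≤ s) : s^2/4 ≤ Real.exp s := by
  have h := Real.add_one_le_exp (s/2)
  have he : Real.exp s = Real.exp (s/2) * Real.exp (s/2) := by
    rw [← Real.exp_add]; ring_nf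
  nlinarith [Real.exp_pos (s/2)]

set_option maxHeartbeats 1000000 in
theorem oscillatory_integrand_integrable_of_spanning
    (n m : ℕ) (v : Fin m → (Fin n → ℝ))
    (hv : ∀ y : Fin n → ℝ, ∃ c : Fin m → ℝ, (∀ i, 0 ≤ c i) ∧ y = ∑ i, c i • v i)
    (z : ℝ) (hz : 0 < z) (w : Fin n → ℂ) :
    Integrable (fun y : Fin n → ℝ =>
      Complex.exp (-((∑ i, Real.exp (∑ j, v i j * y j) : ℝ) : ℂ) / (z : ℂ)) *
        Complex.exp (∑ j, w j * (y j : ℂ))) := by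
  classical
  set f : (Fin n → ℝ) → ℂ := fun y =>
      Complex.exp (-((∑ i, Real.exp (∑ j, v i j * y j) : ℝ) : ℂ) / (z : ℂ)) *
        Complex.exp (∑ j, w j * (y j : ℂ)) with hf
  -- continuity / measurability
  have hcont : Continuous f := by
    apply Continuous.mul
    · apply Complex.continuous_exp.comp
      apply Continuous.div_const
      apply Continuous.neg
      apply Complex.continuous_ofReal.comp
      exact continuous_finset_sum _ fun i _ =>
        Real.continuous_exp.comp (continuous_finset_sum _ fun j _ =>
          (continuous_const.mul (continuous_apply j)))
    · apply Complex.continuous_exp.comp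
      exact continuous_finset_sum _ fun j _ =>
        (continuous_const.mul (Complex.continuous_ofReal.comp (continuous_apply j)))
  -- norm formula
  have hnorm : ∀ y, ‖f y‖ =
      Real.exp (-(∑ i, Real.exp (∑ j, v i j * y j))/z + ∑ j, (w j).re * y j) := by
    intro y
    rw [hf]
    simp only [norm_mul, Complex.norm_exp]
    rw [← Real.exp_add]
    congr 1
    have h1 : (-((∑ i, Real.exp (∑ j, v i j * y j) : ℝ) : ℂ) / (z : ℂ)) =
        (((-(∑ i, Real.exp (∑ j, v i j * y j))/z : ℝ)) : ℂ) := by push_cast; ring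
    rw [h1, Complex.ofReal_re]
    congr 1
    rw [Complex.re_sum]
    exact Finset.sum_congr rfl fun j _ => by simp [Complex.mul_re]
  rcases Nat.eq_zero_or_pos n with hn | hn
  · subst hn
    haveI : IsFiniteMeasure (volume : Measure (Fin 0 → ℝ)) := by
      constructor
      simp [volume_pi, Measure.pi_univ]
    have hconst : f = fun _ => f default := funext fun y => by
      rw [Subsingleton.elim y default]
    rw [hconst]
    exact integrable_const _
  rcases Nat.eq_zero_or_pos m with hm | hm
  · exfalso
    subst hm
    obtain ⟨c, -, hc⟩ := hv (fun _ => 1)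
    have := congrFun hc ⟨0, hn⟩
    simpa using this
  haveI : Nonempty (Fin m) := ⟨⟨0, hm⟩⟩
  -- notation
  set φ : Fin m → (Fin n → ℝ) → ℝ := fun i y => ∑ j, v i j * y j with hφ
  set M : (Fin n → ℝ) → ℝ :=
      fun y => Finset.univ.sup' Finset.univ_nonempty (fun i => φ i y) with hM
  have hφle : ∀ i y, φ i y ≤ M y := by
    intro i y
    have hMy : M y = Finset.univ.sup' Finset.univ_nonempty (fun i => φ i y) := by rw [hM]
    rw [hMy]
    exact Finset.le_sup' (fun i => φ i y) (Finset.mem_univ i)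
  -- dot product computation
  have dot : ∀ (c : Fin m → ℝ) (u : Fin n → ℝ), u = (∑ i, c i • v i) →
      ∀ y, (∑ k, u k * y k) = ∑ i, c i * φ i y := by
    intro c u hu y
    subst hu
    simp only [hφ, Finset.sum_apply, Pi.smul_apply, smul_eq_mul, Finset.sum_mul,
      Finset.mul_sum]
    rw [Finset.sum_comm]
    exact Finset.sum_congr rfl fun i _ => Finset.sum_congr rfl fun k _ => by ring
  -- M is nonnegative
  have hM0 : ∀ y, 0 ≤ M y := by
    intro y
    by_contra hneg
    push_neg at hneg
    obtain ⟨c, hc0, hcy⟩ := hv y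
    have h1 : (∑ k, y k * y k) = ∑ i, c i * φ i y := dot c y hcy y
    have h2 : ∑ i, c i * φ i y ≤ ∑ i, c i * M y :=
      Finset.sum_le_sum fun i _ => mul_le_mul_of_nonneg_left (hφle i y) (hc0 i)
    have h3 : 0 ≤ ∑ k, y k * y k := Finset.sum_nonneg fun k _ => mul_self_nonneg _
    have h4 : ∑ i, c i * M y = (∑ i, c i) * M y := by rw [Finset.sum_mul]
    have h5 : 0 ≤ (∑ i, c i) * M y := by rw [← h4]; linarith [h1 ▸ h3]
    have hc : 0 ≤ ∑ i, c i := Finset.sum_nonneg fun i _ => hc0 i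
    have hcz : (∑ i, c i) = 0 := by
      rcases hc.lt_or_eq with h | h
      · exfalso; nlinarith
      · exact h.symm
    have hci : ∀ i ∈ Finset.univ, c i = 0 :=
      (Finset.sum_eq_zero_iff_of_nonneg fun i _ => hc0 i).mp hcz
    have hy0 : y = 0 := by
      rw [hcy]
      apply Finset.sum_eq_zero
      intro i hi
      rw [hci i hi, zero_smul]
    have h0 : (0:ℝ) ≤ M 0 := by
      have h := hφle ⟨0, hm⟩ 0
      have hz0 : φ ⟨0, hm⟩ (0 : Fin n → ℝ) = 0 := by simp [hφ]
      linarith [hz0 ▸ h]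
    rw [hy0] at hneg
    linarith
  -- choose coefficients
  choose c hc0 hcy using hv
  have hone : ∀ (u : Fin n → ℝ) y, (∑ k, u k * y k) ≤ (∑ i, c u i) * M y := by
    intro u y
    rw [dot (c u) u (hcy u) y]
    calc ∑ i, c u i * φ i y ≤ ∑ i, c u i * M y :=
          Finset.sum_le_sum fun i _ => mul_le_mul_of_nonneg_left (hφle i y) (hc0 u i)
      _ = (∑ i, c u i) * M y := by rw [Finset.sum_mul]
  set g : Fin n → ℝ := fun j =>
      (∑ i, c (Pi.single j 1) i) + (∑ i, c (-(Pi.single j 1)) i) with hg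
  have hgnn : ∀ j, 0 ≤ g j := fun j => add_nonneg
    (Finset.sum_nonneg fun i _ => hc0 _ i) (Finset.sum_nonneg fun i _ => hc0 _ i)
  set C : ℝ := (∑ j, g j) + 1 with hC
  have hC1 : 1 ≤ C := by
    have : 0 ≤ ∑ j, g j := Finset.sum_nonneg fun j _ => hgnn j
    linarith
  have hC0 : 0 < C := by linarith
  have hsumle : ∀ j : Fin n, g j ≤ C := by
    intro j
    have := Finset.single_le_sum (fun j _ => hgnn j) (Finset.mem_univ j)
    linarith
  -- coordinate bound
  have hcoord : ∀ (y : Fin n → ℝ) j, |y j| ≤ C * M y := by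
    intro y j
    have e1 : (∑ k, (Pi.single j 1 : Fin n → ℝ) k * y k) = y j := by
      simp [Pi.single_apply, Finset.sum_ite_eq']
    have e2 : (∑ k, (-(Pi.single j 1) : Fin n → ℝ) k * y k) = -(y j) := by
      simp [Pi.single_apply, Finset.sum_ite_eq']
    have b1 := hone (Pi.single j 1) y
    have b2 := hone (-(Pi.single j 1)) y
    rw [e1] at b1; rw [e2] at b2
    have hA : (∑ i, c (Pi.single j 1) i) ≤ C := by
      have := hsumle j
      have h2 : 0 ≤ ∑ i, c (-(Pi.single j 1)) i := Finset.sum_nonneg fun i _ => hc0 _ i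
      rw [hg] at this
      simp only at this
      linarith
    have hB : (∑ i, c (-(Pi.single j 1)) i) ≤ C := by
      have := hsumle j
      have h2 : 0 ≤ ∑ i, c (Pi.single j 1) i := Finset.sum_nonneg fun i _ => hc0 _ i
      rw [hg] at this
      simp only at this
      linarith
    rw [abs_le]
    constructor
    · have := le_trans b2 (mul_le_mul_of_nonneg_right hB (hM0 y))
      linarith
    · exact le_trans b1 (mul_le_mul_of_nonneg_right hA (hM0 y))
  -- norm bound
  have hnormle : ∀ y : Fin n → ℝ, ‖y‖ ≤ C * M y := by
    intro y
    rw [pi_norm_le_iff_of_nonneg (mul_nonneg hC0.le (hM0 y))]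
    intro j
    rw [Real.norm_eq_abs]
    exact hcoord y j
  -- lower bound on S
  set S : (Fin n → ℝ) → ℝ := fun y => ∑ i, Real.exp (φ i y) with hS
  have hSM : ∀ y, Real.exp (M y) ≤ S y := by
    intro y
    have hSy : S y = ∑ i, Real.exp (φ i y) := by rw [hS]
    have hMy : M y = Finset.univ.sup' Finset.univ_nonempty (fun i => φ i y) := by rw [hM]
    obtain ⟨i0, -, hi0⟩ := Finset.exists_mem_eq_sup' Finset.univ_nonempty (fun i => φ i y)
    rw [hSy, hMy, hi0]
    exact Finset.single_le_sum (f := fun i => Real.exp (φ i y))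
      (fun i _ => (Real.exp_pos _).le) (Finset.mem_univ i0)
  -- the dominating function
  set B : ℝ := ∑ j, |(w j).re| with hB
  have hBnn : 0 ≤ B := Finset.sum_nonneg fun j _ => abs_nonneg _
  set a : ℝ := 1/(4*C^2*z) with ha
  have ha0 : 0 < a := by positivity
  set K : ℝ := (B + n)^2/(4*a) with hK
  have key : ∀ y : Fin n → ℝ,
      ‖f y‖ ≤ Real.exp K * ∏ j, Real.exp (-|y j|) := by
    intro y
    rw [hnorm y]
    have hprod : (∏ j, Real.exp (-|y j|)) = Real.exp (∑ j, -|y j|) := by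
      rw [Real.exp_sum]
    rw [hprod, ← Real.exp_add, Real.exp_le_exp]
    set t : ℝ := ‖y‖ with ht
    have ht0 : 0 ≤ t := norm_nonneg y
    -- linear part
    have hlin : (∑ j, (w j).re * y j) ≤ B * t := by
      calc (∑ j, (w j).re * y j) ≤ ∑ j, |(w j).re| * t := by
            apply Finset.sum_le_sum
            intro j _
            calc (w j).re * y j ≤ |(w j).re * y j| := le_abs_self _
              _ = |(w j).re| * |y j| := abs_mul _ _
              _ ≤ |(w j).re| * t := by
                  apply mul_le_mul_of_nonneg_left _ (abs_nonneg _)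
                  rw [← Real.norm_eq_abs]
                  exact norm_le_pi_norm y j
        _ = B * t := by rw [← Finset.sum_mul]
    -- abs sum part
    have habs : (∑ j, -|y j|) ≥ -(n * t) := by
      have : (∑ j, |y j|) ≤ ∑ j : Fin n, t := by
        apply Finset.sum_le_sum
        intro j _
        rw [← Real.norm_eq_abs]
        exact norm_le_pi_norm y j
      rw [Finset.sum_const, Finset.card_univ, Fintype.card_fin, nsmul_eq_mul] at this
      have := neg_le_neg this
      rw [← Finset.sum_neg_distrib] at this
      exact this
    -- S lower bound quadratic
    have hSt : a * t^2 ≤ S y / z := by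
      have h1 : t ≤ C * M y := hnormle y
      have h2 : t / C ≤ M y := by
        rw [div_le_iff₀ hC0]
        nlinarith
      have h3 : Real.exp (t/C) ≤ Real.exp (M y) := Real.exp_le_exp.mpr h2
      have h4 : (t/C)^2/4 ≤ Real.exp (t/C) := sq_div_four_le_exp' (by positivity)
      have h5 : (t/C)^2/4 ≤ S y := le_trans h4 (le_trans h3 (hSM y))
      rw [le_div_iff₀ hz]
      calc a * t^2 * z = (t/C)^2/4 := by rw [ha]; field_simp
        _ ≤ S y := h5
    have hquad : (B + n) * t - a * t^2 ≤ K := quad_bound' ha0 _ t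
    have : -(S y)/z ≤ -(a * t^2) := by
      have : a * t^2 ≤ S y / z := hSt
      have h7 : -(S y / z) ≤ -(a*t^2) := neg_le_neg this
      calc -(S y)/z = -(S y / z) := by ring
        _ ≤ -(a*t^2) := h7
    calc -(S y)/z + ∑ j, (w j).re * y j ≤ -(a*t^2) + B * t := by
          have := hlin; linarith
      _ = (B + n)*t - a*t^2 + (-(n*t)) := by ring
      _ ≤ K + ∑ j, -|y j| := by
          have := habs; linarith
  -- conclude
  have hg_int : Integrable (fun y : Fin n → ℝ => Real.exp K * ∏ j, Real.exp (-|y j|)) := by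
    apply Integrable.const_mul
    exact Integrable.fintype_prod (fun _ => integrable_exp_neg_abs')
  exact hg_int.mono' hcont.aestronglyMeasurable (Filter.Eventually.of_forall fun y => key y)
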